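/- Let δ > 0, let τ̄ = diag{τ_1 I_{n_1}, …, τ_N I_{n_N}}, ν̄ = diag{ν_1 I_m, …, ν_N I_m}, σ̄ = diag{σ_1 I_m, …, σ_N I_m} with τ_i, ν_i, σ_i > 0, let A_i ∈ ℝ^{m×n_i}, Λ = diag(A_1, …, A_N) ∈ ℝ^{mN×n}, and let L ∈ ℝ^{N×N} be a symmetric matrix with nonnegative off-diagonal row sums Σ_j |L_{ij}| = 2d_i for each i, L̄ = L ⊗ I_m. Define the symmetric block matrix Φ = [[τ̄⁻¹, 0, Λᵀ], [0, ν̄⁻¹, L̄], [Λ, L̄, σ̄⁻¹]]. If for every i: τ_i ≤ 1/(max_{j=1,…,n_i} Σ_{k=1}^m |[A_iᵀ]_{jk}| + δ), ν_i ≤ 1/(2d_i + δ), and σ_i ≤ 1/(max_{j=1,…,m} Σ_{k=1}^{n_i} |[A_i]_{jk}| + 2d_i + δ), then Φ − δ I_{n+2mN} is positive semidefinite (hence Φ is positive definite). -/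

import Mathlib

noncomputable section

open Finset Matrix

private lemma abs_mul_le_half_sq' (a b : ℝ) : |a * b| ≤ (a ^ 2 + b ^ 2) / 2 := by
  rw [abs_mul]
  nlinarith [sq_nonneg (|a| - |b|), sq_abs a, sq_abs b, abs_nonneg a, abs_nonneg b]

private lemma posSemidef_of_diagDominant' {ι : Type*} [Fintype ι] [DecidableEq ι]
    (M : Matrix ι ι ℝ) (hsym : M.IsSymm)
    (hdom : ∀ i, ∑ j ∈ univ.erase i, |M i j| ≤ M i i) : M.PosSemidef := by
  have hsym' : ∀ i j, M j i = M i j := fun i j => congrFun (congrFun hsym i) j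
  refine Matrix.PosSemidef.of_dotProduct_mulVec_nonneg (isHermitian_iff_isSymm.mpr hsym) fun x => ?_
  have hswap : ∑ i, ∑ j ∈ univ.erase i, |M i j| * x j ^ 2
      = ∑ i, ∑ j ∈ univ.erase i, |M i j| * x i ^ 2 := by
    rw [Finset.sum_comm' (s' := fun j => univ.erase j) (t' := univ)
      (by intro a b; simp [eq_comm, ne_comm])]
    exact Finset.sum_congr rfl fun j _ => Finset.sum_congr rfl fun i _ => by rw [hsym']
  have hS : ∑ i, ∑ j ∈ univ.erase i, |M i j| * (x i ^ 2 + x j ^ 2) / 2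
      = ∑ i, (∑ j ∈ univ.erase i, |M i j|) * x i ^ 2 := by
    have key2 : ∀ i : ι, ∑ j ∈ univ.erase i, |M i j| * (x i ^ 2 + x j ^ 2) / 2
        = ((∑ j ∈ univ.erase i, |M i j| * x i ^ 2) + ∑ j ∈ univ.erase i, |M i j| * x j ^ 2) / 2 := by
      intro i
      rw [← Finset.sum_add_distrib, ← Finset.sum_div]
      exact congrArg (· / 2) (Finset.sum_congr rfl fun j _ => by ring)
    calc ∑ i, ∑ j ∈ univ.erase i, |M i j| * (x i ^ 2 + x j ^ 2) / 2
        = ∑ i, ((∑ j ∈ univ.erase i, |M i j| * x i ^ 2)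
            + ∑ j ∈ univ.erase i, |M i j| * x j ^ 2) / 2 :=
          Finset.sum_congr rfl fun i _ => key2 i
      _ = ((∑ i, ∑ j ∈ univ.erase i, |M i j| * x i ^ 2)
            + ∑ i, ∑ j ∈ univ.erase i, |M i j| * x j ^ 2) / 2 := by
          rw [← Finset.sum_div, Finset.sum_add_distrib]
      _ = ∑ i, ∑ j ∈ univ.erase i, |M i j| * x i ^ 2 := by
          rw [hswap, add_self_div_two]
      _ = ∑ i, (∑ j ∈ univ.erase i, |M i j|) * x i ^ 2 :=
          Finset.sum_congr rfl fun i _ => (Finset.sum_mul _ _ _).symm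
  have expand : star x ⬝ᵥ (M *ᵥ x)
      = ∑ i, (M i i * x i ^ 2 + ∑ j ∈ univ.erase i, x i * M i j * x j) := by
    simp only [dotProduct, Matrix.mulVec, Pi.star_apply, star_trivial]
    refine Finset.sum_congr rfl fun i _ => ?_
    rw [Finset.mul_sum, ← Finset.add_sum_erase _ _ (Finset.mem_univ i)]
    congr 1
    · ring
    · exact Finset.sum_congr rfl fun j _ => by ring
  rw [expand]
  have hterm : ∀ i, ∑ j ∈ univ.erase i, (-(|M i j| * (x i ^ 2 + x j ^ 2) / 2))
      ≤ ∑ j ∈ univ.erase i, x i * M i j * x j := by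
    intro i
    refine Finset.sum_le_sum fun j _ => ?_
    have h0 := abs_mul_le_half_sq' (x i) (x j)
    have h1 : |x i * M i j * x j| ≤ |M i j| * (x i ^ 2 + x j ^ 2) / 2 := by
      calc |x i * M i j * x j| = |M i j| * |x i * x j| := by
            rw [show x i * M i j * x j = M i j * (x i * x j) by ring, abs_mul]
        _ ≤ |M i j| * ((x i ^ 2 + x j ^ 2) / 2) :=
            mul_le_mul_of_nonneg_left h0 (abs_nonneg _)
        _ = |M i j| * (x i ^ 2 + x j ^ 2) / 2 := by ring
    linarith [neg_abs_le (x i * M i j * x j)]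
  calc (0 : ℝ) ≤ ∑ i, (M i i - ∑ j ∈ univ.erase i, |M i j|) * x i ^ 2 :=
        Finset.sum_nonneg fun i _ => mul_nonneg (by linarith [hdom i]) (sq_nonneg _)
    _ = ∑ i, M i i * x i ^ 2 - ∑ i, ∑ j ∈ univ.erase i, |M i j| * (x i ^ 2 + x j ^ 2) / 2 := by
        rw [hS, ← Finset.sum_sub_distrib]
        exact Finset.sum_congr rfl fun i _ => by ring
    _ ≤ ∑ i, (M i i * x i ^ 2 + ∑ j ∈ univ.erase i, x i * M i j * x j) := by
        rw [← Finset.sum_sub_distrib]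
        refine Finset.sum_le_sum fun i _ => ?_
        have := hterm i
        rw [Finset.sum_neg_distrib] at this
        linarith

def precondPhi (N m : ℕ) (n : Fin N → ℕ)
    (A : ∀ i : Fin N, Matrix (Fin m) (Fin (n i)) ℝ)
    (τ ν σ : Fin N → ℝ) (L : Matrix (Fin N) (Fin N) ℝ) :
    Matrix ((Σ i : Fin N, Fin (n i)) ⊕ ((Fin N × Fin m) ⊕ (Fin N × Fin m)))
      ((Σ i : Fin N, Fin (n i)) ⊕ ((Fin N × Fin m) ⊕ (Fin N × Fin m))) ℝ :=
  Matrix.of fun r c =>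
    match r, c with
    | .inl p, .inl q => if p = q then 1 / τ p.1 else 0
    | .inl _, .inr (.inl _) => 0
    | .inl p, .inr (.inr (i, k)) => if p.1 = i then A p.1 k p.2 else 0
    | .inr (.inl _), .inl _ => 0
    | .inr (.inl (i, k)), .inr (.inl (i', k')) => if (i, k) = (i', k') then 1 / ν i else 0
    | .inr (.inl (i, k)), .inr (.inr (i', k')) => if k = k' then L i i' else 0
    | .inr (.inr (i, k)), .inl q => if i = q.1 then A q.1 k q.2 else 0
    | .inr (.inr (i, k)), .inr (.inl (i', k')) => if k = k' then L i i' else 0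
    | .inr (.inr (i, k)), .inr (.inr (i', k')) => if (i, k) = (i', k') then 1 / σ i else 0


/-- Under the local step-size choices
`τ_i ≤ 1/(max_j Σ_k |[A_iᵀ]_{jk}| + δ)`, `ν_i ≤ 1/(2d_i + δ)` and
`σ_i ≤ 1/(max_j Σ_k |[A_i]_{jk}| + 2d_i + δ)`, the matrix `Φ − δI` is positive semidefinite,
and hence `Φ` is positive definite. -/
theorem precondPhi_posDef
    (N m : ℕ) (n : Fin N → ℕ)
    (A : ∀ i : Fin N, Matrix (Fin m) (Fin (n i)) ℝ)
    (τ ν σ : Fin N → ℝ) (d : Fin N → ℝ)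
    (hτpos : ∀ i, 0 < τ i) (hνpos : ∀ i, 0 < ν i) (hσpos : ∀ i, 0 < σ i)
    (L : Matrix (Fin N) (Fin N) ℝ) (hLsymm : L.IsSymm)
    (hd : ∀ i, (∑ j, |L i j|) = 2 * d i)
    (δ : ℝ) (hδ : 0 < δ)
    (hτ : ∀ i, τ i ≤ 1 / ((⨆ j : Fin (n i), ∑ k : Fin m, |A i k j|) + δ))
    (hν : ∀ i, ν i ≤ 1 / (2 * d i + δ))
    (hσ : ∀ i, σ i ≤ 1 / ((⨆ j : Fin m, ∑ k : Fin (n i), |A i j k|) + 2 * d i + δ)) :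
    (precondPhi N m n A τ ν σ L - δ •
        (1 : Matrix ((Σ i : Fin N, Fin (n i)) ⊕ ((Fin N × Fin m) ⊕ (Fin N × Fin m)))
          ((Σ i : Fin N, Fin (n i)) ⊕ ((Fin N × Fin m) ⊕ (Fin N × Fin m))) ℝ)).PosSemidef ∧
      (precondPhi N m n A τ ν σ L).PosDef := by
  set ι := (Σ i : Fin N, Fin (n i)) ⊕ ((Fin N × Fin m) ⊕ (Fin N × Fin m))
  set Φ := precondPhi N m n A τ ν σ L with hΦ
  set M : Matrix ι ι ℝ := Φ - δ • 1 with hM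
  have hL' : ∀ a b, L b a = L a b := fun a b => congrFun (congrFun hLsymm a) b
  have hΦsymm : Φ.IsSymm := by
    show Φᵀ = Φ
    ext r c
    rcases r with p | (⟨i, k⟩ | ⟨i, k⟩) <;> rcases c with q | (⟨i', k'⟩ | ⟨i', k'⟩) <;>
      simp only [Matrix.transpose_apply, hΦ, precondPhi, Matrix.of_apply, Prod.mk.injEq]
    all_goals split_ifs with h1 h2
    all_goals first
      | rfl
      | (exact hL' _ _)
      | simp_all
  have hMsymm : M.IsSymm := by
    show Mᵀ = M
    rw [hM, Matrix.transpose_sub, hΦsymm, Matrix.transpose_smul, Matrix.transpose_one]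
  -- nonnegativity facts
  have hd0 : ∀ i, 0 ≤ d i := fun i => by
    have := hd i
    have h2 : 0 ≤ ∑ j, |L i j| := Finset.sum_nonneg fun j _ => abs_nonneg _
    linarith
  have hbddA : ∀ (i : Fin N), BddAbove (Set.range fun j : Fin (n i) => ∑ k : Fin m, |A i k j|) :=
    fun i => (Set.finite_range _).bddAbove
  have hbddB : ∀ (i : Fin N), BddAbove (Set.range fun j : Fin m => ∑ k : Fin (n i), |A i j k|) :=
    fun i => (Set.finite_range _).bddAbove
  -- inverted step-size bounds
  have hτ' : ∀ i (j : Fin (n i)), (∑ k : Fin m, |A i k j|) + δ ≤ 1 / τ i := by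
    intro i j
    have hSj : ∑ k : Fin m, |A i k j| ≤ ⨆ j : Fin (n i), ∑ k : Fin m, |A i k j| :=
      le_ciSup (hbddA i) j
    have hSj0 : 0 ≤ ∑ k : Fin m, |A i k j| := Finset.sum_nonneg fun k _ => abs_nonneg _
    have hpos : 0 < (⨆ j : Fin (n i), ∑ k : Fin m, |A i k j|) + δ := by linarith
    have h1 : τ i * ((⨆ j : Fin (n i), ∑ k : Fin m, |A i k j|) + δ) ≤ 1 := by
      have := hτ i
      rw [le_div_iff₀ hpos] at this
      exact this
    rw [le_div_iff₀ (hτpos i)]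
    nlinarith [hτpos i]
  have hν' : ∀ i, 2 * d i + δ ≤ 1 / ν i := by
    intro i
    have hpos : 0 < 2 * d i + δ := by have := hd0 i; linarith
    have h1 : ν i * (2 * d i + δ) ≤ 1 := by
      have := hν i; rw [le_div_iff₀ hpos] at this; exact this
    rw [le_div_iff₀ (hνpos i)]
    nlinarith [hνpos i]
  have hσ' : ∀ i (k : Fin m), (∑ j : Fin (n i), |A i k j|) + 2 * d i + δ ≤ 1 / σ i := by
    intro i k
    have hSj : ∑ j : Fin (n i), |A i k j| ≤ ⨆ j : Fin m, ∑ k' : Fin (n i), |A i j k'| :=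
      le_ciSup (hbddB i) k
    have hSj0 : 0 ≤ ∑ j : Fin (n i), |A i k j| := Finset.sum_nonneg fun k' _ => abs_nonneg _
    have hpos : 0 < (⨆ j : Fin m, ∑ k' : Fin (n i), |A i j k'|) + 2 * d i + δ := by
      have := hd0 i; linarith
    have h1 : σ i * ((⨆ j : Fin m, ∑ k' : Fin (n i), |A i j k'|) + 2 * d i + δ) ≤ 1 := by
      have := hσ i; rw [le_div_iff₀ hpos] at this; exact this
    rw [le_div_iff₀ (hσpos i)]
    nlinarith [hσpos i]
  -- row sums of Φ off the diagonal
  have row1 : ∀ p : Σ i : Fin N, Fin (n i),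
      ∑ c ∈ univ.erase (Sum.inl p : ι), |Φ (Sum.inl p) c| = ∑ k : Fin m, |A p.1 k p.2| := by
    intro p
    rw [Finset.sum_erase_eq_sub (Finset.mem_univ _)]
    rw [Fintype.sum_sum_type, Fintype.sum_sum_type, Fintype.sum_prod_type, Fintype.sum_prod_type]
    simp [hΦ, precondPhi, apply_ite abs, Finset.sum_ite_eq, Sigma.ext_iff]
  have row2 : ∀ (i : Fin N) (k : Fin m),
      ∑ c ∈ univ.erase (Sum.inr (Sum.inl (i, k)) : ι), |Φ (Sum.inr (Sum.inl (i, k))) c|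
        = ∑ j, |L i j| := by
    intro i k
    rw [Finset.sum_erase_eq_sub (Finset.mem_univ _)]
    rw [Fintype.sum_sum_type, Fintype.sum_sum_type, Fintype.sum_prod_type, Fintype.sum_prod_type]
    simp [hΦ, precondPhi, apply_ite abs, Finset.sum_ite_eq, Prod.ext_iff, Finset.sum_ite_eq',
      ite_and, Finset.sum_ite_irrel]
  have row3 : ∀ (i : Fin N) (k : Fin m),
      ∑ c ∈ univ.erase (Sum.inr (Sum.inr (i, k)) : ι), |Φ (Sum.inr (Sum.inr (i, k))) c|
        = (∑ j : Fin (n i), |A i k j|) + ∑ j, |L i j| := by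
    intro i k
    rw [Finset.sum_erase_eq_sub (Finset.mem_univ _)]
    rw [Fintype.sum_sum_type, Fintype.sum_sum_type, Fintype.sum_prod_type, Fintype.sum_prod_type,
      ← Finset.univ_sigma_univ, Finset.sum_sigma]
    simp [hΦ, precondPhi, apply_ite abs, Finset.sum_ite_eq, Prod.ext_iff, Finset.sum_ite_eq',
      ite_and, Finset.sum_ite_irrel]
    ring
  -- matching M to Φ off the diagonal
  have hMoff : ∀ r : ι, ∀ c ∈ univ.erase r, |M r c| = |Φ r c| := by
    intro r c hc
    have hne : c ≠ r := (Finset.mem_erase.mp hc).1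
    rw [hM]
    simp [Matrix.sub_apply, Matrix.smul_apply, Matrix.one_apply, Ne.symm hne]
  have hMdiag : ∀ r : ι, M r r = Φ r r - δ := by
    intro r
    rw [hM]
    simp [Matrix.sub_apply, Matrix.smul_apply, Matrix.one_apply]
  have hdom : ∀ r : ι, ∑ c ∈ univ.erase r, |M r c| ≤ M r r := by
    intro r
    rw [Finset.sum_congr rfl (hMoff r), hMdiag]
    rcases r with p | (⟨i, k⟩ | ⟨i, k⟩)
    · rw [row1 p]
      have hdiag : Φ (Sum.inl p) (Sum.inl p) = 1 / τ p.1 := by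
        simp [hΦ, precondPhi]
      rw [hdiag]
      linarith [hτ' p.1 p.2]
    · rw [row2 i k, hd i]
      have hdiag : Φ (Sum.inr (Sum.inl (i, k))) (Sum.inr (Sum.inl (i, k))) = 1 / ν i := by
        simp [hΦ, precondPhi]
      rw [hdiag]
      linarith [hν' i]
    · rw [row3 i k, hd i]
      have hdiag : Φ (Sum.inr (Sum.inr (i, k))) (Sum.inr (Sum.inr (i, k))) = 1 / σ i := by
        simp [hΦ, precondPhi]
      rw [hdiag]
      linarith [hσ' i k]
  have hPSD : M.PosSemidef := posSemidef_of_diagDominant' M hMsymm hdom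
  refine ⟨hPSD, ?_⟩
  have hδI : (δ • (1 : Matrix ι ι ℝ)).PosDef := by
    have : (δ • (1 : Matrix ι ι ℝ)) = Matrix.diagonal (fun _ => δ) := by
      ext r c
      by_cases h : r = c <;> simp [Matrix.one_apply, Matrix.diagonal_apply, h]
    rw [this]
    exact Matrix.PosDef.diagonal fun _ => hδ
  have hsum : Φ = M + δ • (1 : Matrix ι ι ℝ) := by
    rw [hM, sub_add_cancel]
  rw [hsum]
  exact Matrix.PosDef.posSemidef_add hPSD hδI

end
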